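/- Let k ≥ 3 and let F be a k-CNF instance with no clauses of length 1, with m_i clauses of length i (2 ≤ i ≤ k), m = ∑ m_i > 0, and average clause length η = (∑ i·m_i)/m. If α* is an optimal NAE-assignment, then m ≤ s(α*)/ξ' where ξ' = (2^{k-1}(η + k - 4) - 2η + 4)/(2^k (k-2)). -/

import Mathlib

open Finset

lemma nat_key (a K : ℕ) (h : a ≤ K) :
    K * 2^K + a * 2^(K+a) ≤ K * 2^(K+a) + a * 2^a := by
  rcases eq_or_lt_of_le h with rfl | h'
  · exact le_of_eq (Nat.add_comm _ _)
  · have h1 : a < 2^a := Nat.lt_two_pow_self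
    have h2 : K ≤ (K - a) * 2^a := by
      have hd : 1 ≤ K - a := by omega
      calc K ≤ (K - a) * (a+1) := by nlinarith [Nat.sub_add_cancel h]
        _ ≤ (K - a) * 2^a := Nat.mul_le_mul_left _ h1
    have h3 : K * 2^K ≤ (K - a) * 2^(K+a) := by
      calc K * 2^K ≤ (K - a) * 2^a * 2^K := Nat.mul_le_mul_right _ h2
        _ = (K - a) * 2^(K+a) := by rw [pow_add]; ring
    calc K * 2^K + a * 2^(K+a) ≤ (K-a) * 2^(K+a) + a * 2^(K+a) := by
          exact Nat.add_le_add_right h3 _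
      _ = K * 2^(K+a) := by rw [← Nat.add_mul, Nat.sub_add_cancel h]
      _ ≤ K * 2^(K+a) + a * 2^a := Nat.le_add_right _ _

lemma chord (k i : ℕ) (hk : 3 ≤ k) (hi : 2 ≤ i) (hik : i ≤ k) :
    ((2:ℝ)^(k-1) - 2) / (2^k * ((k:ℝ)-2)) * ((i:ℝ) - 2) + 1/2 ≤ 1 - 2 / 2^i := by
  obtain ⟨K, rfl⟩ : ∃ K, k = K + 2 := ⟨k - 2, by omega⟩
  obtain ⟨a, rfl⟩ : ∃ a, i = a + 2 := ⟨i - 2, by omega⟩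
  have hK : 1 ≤ K := by omega
  have haK : a ≤ K := by omega
  have key : (K:ℝ) * 2^K + a * (2^K * 2^a) ≤ K * (2^K * 2^a) + a * 2^a := by
    have := nat_key a K haK
    have := (Nat.cast_le (α := ℝ)).2 this
    push_cast [pow_add] at this
    linarith
  have hX : (0:ℝ) < 2^K := by positivity
  have hY : (0:ℝ) < 2^a := by positivity
  have hKR : (0:ℝ) < (K:ℝ) := by exact_mod_cast hK
  have e1 : K + 2 - 1 = K + 1 := by omega
  rw [e1]
  push_cast
  rw [pow_succ, pow_add, pow_add]
  have hden : ((K:ℝ) + 2 - 2) = K := by ring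
  rw [hden]
  have h2 : (1:ℝ) - 2 / (2^a * 2^2) = (2^a * 2^2 - 2) / (2^a * 2^2) := by
    field_simp
  rw [div_mul_eq_mul_div, div_add' _ _ _ (by positivity), h2,
    div_le_div_iff₀ (by positivity) (by positivity)]
  ring_nf
  nlinarith [key, hX, hY, hKR]


def naeB (α : ℕ → Bool) (C : Finset (ℕ × Bool)) : Bool :=
  decide ((∃ l ∈ C, α l.1 = l.2) ∧ (∃ l ∈ C, α l.1 ≠ l.2))

abbrev αof (S : Finset ℕ) : ℕ → Bool := fun x => decide (x ∈ S)

-- count of assignments making all literals have value (f l.2)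
lemma allEq_count_le (V : Finset ℕ) (C : Finset (ℕ × Bool)) (f : Bool → Bool)
    (hsub : C.image Prod.fst ⊆ V) (hinj : Set.InjOn Prod.fst (C : Set (ℕ × Bool))) :
    (V.powerset.filter (fun S => ∀ l ∈ C, αof S l.1 = f l.2)).card
      ≤ 2 ^ (V.card - C.card) := by
  have hcard : (C.image Prod.fst).card = C.card := Finset.card_image_of_injOn hinj
  have h := Finset.card_le_card_of_injOn (f := fun S => S \ C.image Prod.fst)
    (s := V.powerset.filter (fun S => ∀ l ∈ C, αof S l.1 = f l.2))
    (t := (V \ C.image Prod.fst).powerset)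
    (by
      intro S hS
      simp only [mem_coe, mem_filter, mem_powerset] at hS ⊢
      exact sdiff_subset_sdiff hS.1 (le_refl _))
    (by
      intro S1 h1 S2 h2 he'
      have he : S1 \ C.image Prod.fst = S2 \ C.image Prod.fst := he'
      simp only [coe_filter, Set.mem_setOf_eq, mem_powerset] at h1 h2
      ext x
      by_cases hx : x ∈ C.image Prod.fst
      · simp only [mem_image] at hx
        obtain ⟨l, hl, rfl⟩ := hx
        have e1 := h1.2 l hl
        have e2 := h2.2 l hl
        simp only [αof, decide_eq_true_eq] at e1 e2
        constructor
        · intro hmem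
          have : decide (l.1 ∈ S1) = true := by simpa using hmem
          rw [e1] at this; rw [← e2] at this; simpa using this
        · intro hmem
          have : decide (l.1 ∈ S2) = true := by simpa using hmem
          rw [e2] at this; rw [← e1] at this; simpa using this
      · constructor
        · intro hmem
          have : x ∈ S1 \ C.image Prod.fst := mem_sdiff.2 ⟨hmem, hx⟩
          rw [he] at this
          exact (mem_sdiff.1 this).1
        · intro hmem
          have : x ∈ S2 \ C.image Prod.fst := mem_sdiff.2 ⟨hmem, hx⟩
          rw [← he] at this
          exact (mem_sdiff.1 this).1)
  calc _ ≤ (V \ C.image Prod.fst).powerset.card := h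
    _ = 2 ^ (V \ C.image Prod.fst).card := Finset.card_powerset _
    _ = 2 ^ (V.card - C.card) := by rw [card_sdiff_of_subset hsub, hcard]

lemma clause_good (V : Finset ℕ) (C : Finset (ℕ × Bool))
    (hsub : C.image Prod.fst ⊆ V) (h2 : 2 ≤ C.card) :
    (2:ℝ)^V.card * (1 - 2 / 2 ^ C.card)
      ≤ ((V.powerset.filter (fun S => naeB (αof S) C = true)).card : ℝ) := by
  by_cases hb : ∃ x, (x, true) ∈ C ∧ (x, false) ∈ C
  · obtain ⟨x, ht, hf⟩ := hb
    have : V.powerset.filter (fun S => naeB (αof S) C = true) = V.powerset := by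
      apply Finset.filter_true_of_mem
      intro S _
      simp only [naeB, decide_eq_true_eq]
      by_cases hx : x ∈ S
      · exact ⟨⟨(x, true), ht, by simp [αof, hx]⟩, ⟨(x, false), hf, by simp [αof, hx]⟩⟩
      · exact ⟨⟨(x, false), hf, by simp [αof, hx]⟩, ⟨(x, true), ht, by simp [αof, hx]⟩⟩
    rw [this, Finset.card_powerset]
    have : (2:ℝ) / 2 ^ C.card ≥ 0 := by positivity
    push_cast
    nlinarith [pow_pos (by norm_num : (0:ℝ) < 2) V.card]
  · push_neg at hb
    have hinj : Set.InjOn Prod.fst (C : Set (ℕ × Bool)) := by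
      rintro ⟨x1, b1⟩ h1 ⟨x2, b2⟩ h2 (he : x1 = x2)
      subst he
      simp only [Finset.mem_coe] at h1 h2
      cases b1 <;> cases b2
      · rfl
      · exact absurd h1 (hb x1 h2)
      · exact absurd h2 (hb x1 h1)
      · rfl
    have hCV : C.card ≤ V.card := by
      calc C.card = (C.image Prod.fst).card := (Finset.card_image_of_injOn hinj).symm
        _ ≤ V.card := Finset.card_le_card hsub
    have hA := allEq_count_le V C (fun b => b) hsub hinj
    have hB := allEq_count_le V C (fun b => !b) hsub hinj
    have hC0 : C.Nonempty := Finset.card_pos.1 (by omega)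
    have hsplit : (V.powerset.filter (fun S => naeB (αof S) C = true)).card
        = 2 ^ V.card - (V.powerset.filter (fun S => ¬ (naeB (αof S) C = true))).card := by
      rw [← Finset.card_powerset V]
      have := Finset.card_filter_add_card_filter_not
        (s := V.powerset) (p := fun S => naeB (αof S) C = true)
      omega
    have hbad : (V.powerset.filter (fun S => ¬ (naeB (αof S) C = true))).card
        ≤ 2 * 2 ^ (V.card - C.card) := by
      have hsub2 : V.powerset.filter (fun S => ¬ (naeB (αof S) C = true))
          ⊆ (V.powerset.filter (fun S => ∀ l ∈ C, αof S l.1 = (fun b => b) l.2))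
            ∪ (V.powerset.filter (fun S => ∀ l ∈ C, αof S l.1 = (fun b => !b) l.2)) := by
        intro S hS
        simp only [Finset.mem_filter, naeB, decide_eq_true_eq] at hS
        obtain ⟨hSV, hS2⟩ := hS
        rw [not_and_or] at hS2
        simp only [Finset.mem_union, Finset.mem_filter]
        rcases hS2 with h | h
        · push_neg at h
          refine Or.inr ⟨hSV, fun l hl => ?_⟩
          have := h l hl
          cases hll : l.2 <;> simp_all
        · push_neg at h
          refine Or.inl ⟨hSV, fun l hl => ?_⟩
          have := h l hl
          cases hll : l.2 <;> simp_all
      calc _ ≤ _ := Finset.card_le_card hsub2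
        _ ≤ _ := Finset.card_union_le _ _
        _ ≤ 2 * 2 ^ (V.card - C.card) := by beta_reduce; omega
    rw [hsplit]
    have hcast : ((2 ^ V.card - (V.powerset.filter (fun S => ¬ (naeB (αof S) C = true))).card : ℕ) : ℝ)
        = 2 ^ V.card - ((V.powerset.filter (fun S => ¬ (naeB (αof S) C = true))).card : ℝ) := by
      have hle : (V.powerset.filter (fun S => ¬ (naeB (αof S) C = true))).card ≤ 2 ^ V.card := by
        calc _ ≤ V.powerset.card := Finset.card_filter_le _ _
          _ = 2 ^ V.card := Finset.card_powerset _
      push_cast [hle]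
      ring
    rw [hcast]
    have hbadR : ((V.powerset.filter (fun S => ¬ (naeB (αof S) C = true))).card : ℝ)
        ≤ 2 * 2 ^ (V.card - C.card) := by exact_mod_cast hbad
    have hpow : (2:ℝ) ^ (V.card - C.card) = 2 ^ V.card / 2 ^ C.card := by
      rw [eq_div_iff (by positivity), ← pow_add]
      congr 1
      omega
    rw [hpow] at hbadR
    have h1 : (2:ℝ)^V.card * (1 - 2 / 2 ^ C.card)
        = 2 ^ V.card - 2 * (2 ^ V.card / 2 ^ C.card) := by ring
    linarith


lemma sum_lb (V : Finset ℕ)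
    (good : Finset (ℕ × Bool) → ℝ)
    (hgood : ∀ C, C.image Prod.fst ⊆ V → 2 ≤ C.card →
      good C ≤ ((V.powerset.filter (fun S => naeB (αof S) C = true)).card : ℝ)) :
    ∀ F : List (Finset (ℕ × Bool)), (∀ C ∈ F, C.image Prod.fst ⊆ V ∧ 2 ≤ C.card) →
    (F.map good).sum ≤ ∑ S ∈ V.powerset, (F.countP (naeB (αof S)) : ℝ) := by
  intro F
  induction F with
  | nil => simp
  | cons C F ih =>
    intro h
    have hC := h C (List.mem_cons_self)
    have hF : ∀ C' ∈ F, C'.image Prod.fst ⊆ V ∧ 2 ≤ C'.card :=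
      fun C' hC' => h C' (List.mem_cons_of_mem _ hC')
    simp only [List.map_cons, List.sum_cons, List.countP_cons]
    have hsum : ∑ S ∈ V.powerset, ((F.countP (naeB (αof S)) + if naeB (αof S) C = true then 1 else 0 : ℕ) : ℝ)
        = (∑ S ∈ V.powerset, (F.countP (naeB (αof S)) : ℝ))
          + ((V.powerset.filter (fun S => naeB (αof S) C = true)).card : ℝ) := by
      push_cast
      rw [Finset.sum_add_distrib]
      congr 1
      rw [Finset.sum_boole]
    rw [hsum]
    have := ih hF
    have := hgood C hC.1 hC.2
    linarith

lemma map_sum_fiber (k : ℕ) (g : ℕ → ℝ) :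
    ∀ F : List (Finset (ℕ × Bool)), (∀ C ∈ F, 2 ≤ C.card ∧ C.card ≤ k) →
    (F.map (fun C => g C.card)).sum
      = ∑ i ∈ Icc 2 k, g i * ((F.countP (fun C => decide (C.card = i))) : ℝ) := by
  intro F
  induction F with
  | nil => simp
  | cons C F ih =>
    intro h
    have hC := h C (List.mem_cons_self)
    have hF : ∀ C' ∈ F, 2 ≤ C'.card ∧ C'.card ≤ k :=
      fun C' hC' => h C' (List.mem_cons_of_mem _ hC')
    simp only [List.map_cons, List.sum_cons, List.countP_cons, ih hF]
    push_cast
    simp only [mul_add, decide_eq_true_eq]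
    rw [Finset.sum_add_distrib]
    have hone : ∑ i ∈ Icc 2 k, g i * (if C.card = i then (1:ℝ) else 0) = g C.card := by
      have hmem : C.card ∈ Icc 2 k := Finset.mem_Icc.2 hC
      simp only [mul_ite, mul_one, mul_zero]
      rw [Finset.sum_ite_eq (Icc 2 k) C.card g, if_pos hmem]
    rw [hone]
    ring

def varsOf : List (Finset (ℕ × Bool)) → Finset ℕ
  | [] => ∅
  | C :: F => C.image Prod.fst ∪ varsOf F

lemma subset_varsOf : ∀ F : List (Finset (ℕ × Bool)), ∀ C ∈ F, C.image Prod.fst ⊆ varsOf F := by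
  intro F
  induction F with
  | nil => simp
  | cons C F ih =>
    intro D hD
    rcases List.mem_cons.1 hD with rfl | hD
    · exact Finset.subset_union_left.trans (le_refl _)
    · exact (ih D hD).trans Finset.subset_union_right

theorem stmt_8 (k : ℕ) (hk : 3 ≤ k) (F : List (Finset (ℕ × Bool)))
    (hF : ∀ C ∈ F, 2 ≤ C.card ∧ C.card ≤ k)
    (hm : 0 < F.length)
    (s : (ℕ → Bool) → ℕ)
    (hs : ∀ α, s α = F.countP fun C =>
      decide ((∃ l ∈ C, α l.1 = l.2) ∧ (∃ l ∈ C, α l.1 ≠ l.2)))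
    (mc : ℕ → ℕ) (hmc : ∀ i, mc i = F.countP fun C => decide (C.card = i))
    (η : ℝ) (hη : η = (∑ i ∈ Finset.Icc 2 k, (i : ℝ) * mc i) / F.length)
    (αopt : ℕ → Bool) (hopt : ∀ α, s α ≤ s αopt) :
    (F.length : ℝ) ≤ (s αopt : ℝ) /
      (((2 : ℝ) ^ (k - 1) * (η + (k : ℝ) - 4) - 2 * η + 4) / (2 ^ k * ((k : ℝ) - 2))) := by
  classical
  set V := varsOf F with hV
  -- Step 1: expected-count lower bound on s αopt
  have hstep1 : (F.map (fun C => (1:ℝ) - 2 / 2 ^ C.card)).sum ≤ (s αopt : ℝ) := by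
    have hlb := sum_lb V (fun C => (2:ℝ)^V.card * (1 - 2 / 2 ^ C.card))
      (fun C h1 h2 => clause_good V C h1 h2) F
      (fun C hC => ⟨subset_varsOf F C hC, (hF C hC).1⟩)
    have hub : ∑ S ∈ V.powerset, ((F.countP (naeB (αof S))) : ℝ)
        ≤ (2:ℝ)^V.card * (s αopt : ℝ) := by
      have : ∀ S ∈ V.powerset, ((F.countP (naeB (αof S))) : ℝ) ≤ (s αopt : ℝ) := by
        intro S _
        have : F.countP (naeB (αof S)) = s (αof S) := by rw [hs]; rfl
        rw [this]
        exact_mod_cast hopt (αof S)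
      calc _ ≤ ∑ _S ∈ V.powerset, (s αopt : ℝ) := Finset.sum_le_sum this
        _ = (V.powerset.card : ℝ) * (s αopt : ℝ) := by rw [Finset.sum_const, nsmul_eq_mul]
        _ = (2:ℝ)^V.card * (s αopt : ℝ) := by rw [Finset.card_powerset]; push_cast; ring
    have hfac : (F.map (fun C => (2:ℝ)^V.card * (1 - 2 / 2 ^ C.card))).sum
        = (2:ℝ)^V.card * (F.map (fun C => (1:ℝ) - 2 / 2 ^ C.card)).sum := by
      rw [← List.sum_map_mul_left]
    have hpos : (0:ℝ) < 2^V.card := by positivity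
    have := hlb.trans hub
    rw [hfac] at this
    exact le_of_mul_le_mul_left this hpos
  -- Step 2: rewrite list sums as fiber sums
  have hfib1 : (F.map (fun C => (1:ℝ) - 2 / 2 ^ C.card)).sum
      = ∑ i ∈ Icc 2 k, ((1:ℝ) - 2 / 2 ^ i) * (mc i : ℝ) := by
    have := map_sum_fiber k (fun i => (1:ℝ) - 2 / 2 ^ i) F hF
    simpa only [← hmc] using this
  have hfibM : (F.length : ℝ) = ∑ i ∈ Icc 2 k, (mc i : ℝ) := by
    have := map_sum_fiber k (fun _ => (1:ℝ)) F hF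
    simp only [← hmc, one_mul] at this
    rw [← this]
    simp
  -- abbreviations
  set M : ℝ := (F.length : ℝ) with hM
  set T : ℝ := ∑ i ∈ Icc 2 k, (i : ℝ) * mc i with hT
  have hMpos : (0:ℝ) < M := by rw [hM]; exact_mod_cast hm
  have hTM : T = η * M := by rw [hη]; field_simp
  set σ : ℝ := ((2:ℝ)^(k-1) - 2) / (2^k * ((k:ℝ)-2)) with hσ
  -- Step 3: chord bound
  have hchord : σ * T + (1/2 - 2*σ) * M ≤ ∑ i ∈ Icc 2 k, ((1:ℝ) - 2 / 2 ^ i) * (mc i : ℝ) := by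
    have hpt : ∀ i ∈ Icc 2 k, (σ * ((i:ℝ) - 2) + 1/2) * (mc i : ℝ)
        ≤ ((1:ℝ) - 2 / 2 ^ i) * (mc i : ℝ) := by
      intro i hi
      rw [Finset.mem_Icc] at hi
      exact mul_le_mul_of_nonneg_right (chord k i hk hi.1 hi.2) (by positivity)
    calc σ * T + (1/2 - 2*σ) * M
        = ∑ i ∈ Icc 2 k, (σ * ((i:ℝ) - 2) + 1/2) * (mc i : ℝ) := by
          rw [hfibM, hT, Finset.mul_sum, Finset.mul_sum, ← Finset.sum_add_distrib]
          exact Finset.sum_congr rfl (fun i _ => by ring)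
      _ ≤ _ := Finset.sum_le_sum hpt
  -- positivity of ξ'
  have hk2 : (0:ℝ) < (k:ℝ) - 2 := by
    have : (3:ℝ) ≤ (k:ℝ) := by exact_mod_cast hk
    linarith
  have hσnn : 0 ≤ σ := by
    have h4 : (4:ℝ) ≤ 2^(k-1) := by
      calc (4:ℝ) = 2^2 := by norm_num
        _ ≤ 2^(k-1) := by
          apply pow_le_pow_right₀ (by norm_num)
          omega
    rw [hσ]
    apply div_nonneg (by linarith)
    positivity
  have hη2 : 2 ≤ η := by
    have hT2 : 2 * M ≤ T := by
      rw [hfibM, hT, Finset.mul_sum]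
      apply Finset.sum_le_sum
      intro i hi
      rw [Finset.mem_Icc] at hi
      have : (2:ℝ) ≤ (i:ℝ) := by exact_mod_cast hi.1
      nlinarith [Nat.cast_nonneg (α := ℝ) (mc i)]
    rw [hη, le_div_iff₀ hMpos]
    rw [hTM] at hT2
    nlinarith
  have hξeq : ((2 : ℝ) ^ (k - 1) * (η + (k : ℝ) - 4) - 2 * η + 4) / (2 ^ k * ((k : ℝ) - 2))
      = σ * (η - 2) + 1/2 := by
    rw [hσ]
    have h2k : ((2:ℝ)^k) = 2 * 2^(k-1) := by
      rw [← pow_succ']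
      congr 1
      omega
    rw [h2k]
    field_simp
    ring
  have hξpos : 0 < ((2 : ℝ) ^ (k - 1) * (η + (k : ℝ) - 4) - 2 * η + 4) / (2 ^ k * ((k : ℝ) - 2)) := by
    rw [hξeq]
    nlinarith
  rw [le_div_iff₀ hξpos, hξeq]
  calc M * (σ * (η - 2) + 1/2) = σ * (η * M) + (1/2 - 2*σ) * M := by ring
    _ = σ * T + (1/2 - 2*σ) * M := by rw [hTM]
    _ ≤ ∑ i ∈ Icc 2 k, ((1:ℝ) - 2 / 2 ^ i) * (mc i : ℝ) := hchord
    _ ≤ (s αopt : ℝ) := by rw [← hfib1]; exact hstep1
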